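/- arXiv:2102.04941 — 4 statements merged into one kernel-verified Lean document; each statement's English description precedes it below -/
import Mathlib

section
/- The function ψ̄_{Q̃} is convex on the set {Q : S × S → ℝ | Q_{ij} ≥ 0 for all (i,j) ∈ B and Q_{ij} = 0 for (i,j) ∉ B}. -/
open Finset

/-- Row sum `μ_i(Q) = Σ_{j : (i,j) ∈ B} Q_{ij}` of an edge measure `Q` supported on `B`. -/
noncomputable def rowSum {S : Type} [Fintype S] [DecidableEq S]
    (B : Finset (S × S)) (Q : S × S → ℝ) (i : S) : ℝ :=
  ∑ j ∈ Finset.univ.filter (fun j => (i, j) ∈ B), Q (i, j)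

/-- The shifted edge measure `Q̂_{ij} = (1-κ)·Q̃_{ij} + κ·Q_{ij}`. -/
noncomputable def hatQ {α : Type} (Qt : α → ℝ) (κ : ℝ) (Q : α → ℝ) : α → ℝ :=
  fun e => (1 - κ) * Qt e + κ * Q e

/-- The surrogate penalty function
`ψ̄_{Q̃}(Q) = κ'·( Σ_{(i,j)∈B} Q̂_{ij}·log(Q̂_{ij}/Q̃_{ij}) − Σ_{i∈S} μ̂_i·log(μ̂_i/μ̃_i) )`,
with the convention `0·log(0/b) = 0` (automatic, since `Real.log 0 = 0`). -/
noncomputable def psibar {S : Type} [Fintype S] [DecidableEq S]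
    (B : Finset (S × S)) (Qt : S × S → ℝ) (κ κ' : ℝ) (Q : S × S → ℝ) : ℝ :=
  κ' * ((∑ e ∈ B, hatQ Qt κ Q e * Real.log (hatQ Qt κ Q e / Qt e)) -
        ∑ i : S, rowSum B (hatQ Qt κ Q) i *
          Real.log (rowSum B (hatQ Qt κ Q) i / rowSum B Qt i))

lemma term_eq_aux (t a b : ℝ) (ht : 0 ≤ t) (hb : 0 ≤ b) (hab : b = 0 → a = 0) :
    (t * a) * Real.log ((t * a) / (t * b)) = t * (a * Real.log (a / b)) := by
  rcases ht.eq_or_lt with h | h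
  · simp [← h]
  rcases hb.eq_or_lt with h0 | h0
  · simp [hab h0.symm]
  · rw [mul_div_mul_left _ _ h.ne']; ring

/-- Two-term log-sum (joint convexity of the relative-entropy kernel `x log(x/y)`),
with conventions at zero. -/
lemma kl_key (a b a' b' θ τ : ℝ) (ha : 0 ≤ a) (hb : 0 ≤ b) (hab : b = 0 → a = 0)
    (ha' : 0 ≤ a') (hb' : 0 ≤ b') (hab' : b' = 0 → a' = 0)
    (hθ : 0 ≤ θ) (hτ : 0 ≤ τ) (hθτ : θ + τ = 1) :
    (θ * a + τ * a') * Real.log ((θ * a + τ * a') / (θ * b + τ * b')) ≤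
      θ * (a * Real.log (a / b)) + τ * (a' * Real.log (a' / b')) := by
  rcases hb.eq_or_lt with hb0 | hb0
  · have ha0 : a = 0 := hab hb0.symm
    subst ha0
    rw [← hb0]
    simpa using (term_eq_aux τ a' b' hτ hb' hab').le
  rcases hb'.eq_or_lt with hb0' | hb0'
  · have ha0 : a' = 0 := hab' hb0'.symm
    subst ha0
    rw [← hb0']
    simpa using (term_eq_aux θ a b hθ hb (fun h => absurd h hb0.ne')).le
  rcases hθ.eq_or_lt with hθ0 | hθ0
  · have : τ = 1 := by linarith
    subst this
    simp [← hθ0]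
  rcases hτ.eq_or_lt with hτ0 | hτ0
  · have : θ = 1 := by linarith
    subst this
    simp [← hτ0]
  set s := θ * b + τ * b' with hs
  have hspos : 0 < s := by positivity
  have key := Real.convexOn_mul_log.2 (Set.mem_Ici.2 (div_nonneg ha hb0.le))
    (Set.mem_Ici.2 (div_nonneg ha' hb0'.le))
    (show (0:ℝ) ≤ θ * b / s by positivity) (show (0:ℝ) ≤ τ * b' / s by positivity)
    (show θ * b / s + τ * b' / s = 1 by field_simp; exact hs.symm)
  simp only [smul_eq_mul] at key
  have h1 : θ * b / s * (a / b) + τ * b' / s * (a' / b') = (θ * a + τ * a') / s := by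
    field_simp
  rw [h1] at key
  have key2 := mul_le_mul_of_nonneg_left key hspos.le
  calc (θ * a + τ * a') * Real.log ((θ * a + τ * a') / s)
      = s * ((θ * a + τ * a') / s * Real.log ((θ * a + τ * a') / s)) := by
        field_simp
    _ ≤ s * (θ * b / s * (a / b * Real.log (a / b)) +
          τ * b' / s * (a' / b' * Real.log (a' / b'))) := key2
    _ = θ * (a * Real.log (a / b)) + τ * (a' * Real.log (a' / b')) := by
        field_simp

lemma sum_grouped {S : Type} [Fintype S] [DecidableEq S] (B : Finset (S × S))
    (f : S × S → ℝ) :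
    ∑ e ∈ B, f e = ∑ i : S, ∑ j ∈ Finset.univ.filter (fun j => (i, j) ∈ B), f (i, j) := by
  calc ∑ e ∈ B, f e = ∑ e ∈ Finset.univ.filter (· ∈ B), f e := by
        rw [Finset.filter_univ_mem]
    _ = ∑ e : S × S, if e ∈ B then f e else 0 := Finset.sum_filter _ _
    _ = ∑ i : S, ∑ j : S, if (i, j) ∈ B then f (i, j) else 0 := Fintype.sum_prod_type _
    _ = ∑ i : S, ∑ j ∈ Finset.univ.filter (fun j => (i, j) ∈ B), f (i, j) :=
        Finset.sum_congr rfl fun i _ => (Finset.sum_filter _ _).symm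

/-- Rewriting `ψ̄` as a single sum of relative-entropy kernels over edges. -/
lemma psibar_eq {S : Type} [Fintype S] [DecidableEq S] (B : Finset (S × S))
    (hB : ∀ i : S, ∃ j : S, (i, j) ∈ B)
    (Qt : S × S → ℝ) (hQtpos : ∀ e ∈ B, 0 < Qt e) (κ κ' : ℝ) (Q : S × S → ℝ)
    (hQpos : ∀ e ∈ B, 0 ≤ hatQ Qt κ Q e) :
    psibar B Qt κ κ' Q = κ' * ∑ e ∈ B, hatQ Qt κ Q e *
      Real.log (hatQ Qt κ Q e /
        (Qt e * (rowSum B (hatQ Qt κ Q) e.1 / rowSum B Qt e.1))) := by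
  set H := hatQ Qt κ Q with hH
  have hμt : ∀ i, 0 < rowSum B Qt i := by
    intro i
    obtain ⟨j, hj⟩ := hB i
    exact Finset.sum_pos (fun j' hj' => hQtpos _ (Finset.mem_filter.1 hj').2)
      ⟨j, Finset.mem_filter.2 ⟨Finset.mem_univ j, hj⟩⟩
  have hterm : ∀ e ∈ B, H e * Real.log (H e /
        (Qt e * (rowSum B H e.1 / rowSum B Qt e.1))) =
      H e * Real.log (H e / Qt e) -
        H e * Real.log (rowSum B H e.1 / rowSum B Qt e.1) := by
    intro e he
    rcases (hQpos e he).eq_or_lt with h0 | h0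
    · simp [← h0]
    · have hmem : e.2 ∈ Finset.univ.filter (fun j => (e.1, j) ∈ B) :=
        Finset.mem_filter.2 ⟨Finset.mem_univ _, by rwa [Prod.mk.eta]⟩
      have hle := Finset.single_le_sum (f := fun j => H (e.1, j))
        (fun j hj => hQpos _ (Finset.mem_filter.1 hj).2) hmem
      have hμpos : 0 < rowSum B H e.1 :=
        lt_of_lt_of_le h0 (by simpa [rowSum] using hle)
      have hQte := hQtpos e he
      have hr : 0 < rowSum B H e.1 / rowSum B Qt e.1 := div_pos hμpos (hμt e.1)
      rw [Real.log_div h0.ne' (by positivity), Real.log_mul hQte.ne' hr.ne',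
        Real.log_div h0.ne' hQte.ne']
      ring
  unfold psibar
  congr 1
  rw [Finset.sum_congr rfl hterm, Finset.sum_sub_distrib]
  congr 1
  rw [sum_grouped B (fun e => H e * Real.log (rowSum B H e.1 / rowSum B Qt e.1))]
  refine Finset.sum_congr rfl fun i _ => ?_
  rw [rowSum, Finset.sum_mul]
  rfl

/-- The surrogate penalty function `ψ̄_{Q̃}` is convex on the set of
edge measures `Q` that are nonnegative on `B` and vanish off `B`. -/
theorem psibar_convexOn {S : Type} [Fintype S] [DecidableEq S] (B : Finset (S × S))
    (hB : ∀ i : S, ∃ j : S, (i, j) ∈ B)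
    (Qt : S × S → ℝ) (hQtoff : ∀ e ∉ B, Qt e = 0) (hQtpos : ∀ e ∈ B, 0 < Qt e)
    (κ κ' : ℝ) (hκ0 : 0 < κ) (hκ1 : κ ≤ 1) (hκ' : 0 < κ') :
    ConvexOn ℝ {Q : S × S → ℝ | (∀ e ∈ B, 0 ≤ Q e) ∧ ∀ e ∉ B, Q e = 0}
      (psibar B Qt κ κ') := by
  have hμt : ∀ i, 0 < rowSum B Qt i := by
    intro i
    obtain ⟨j, hj⟩ := hB i
    exact Finset.sum_pos (fun j' hj' => hQtpos _ (Finset.mem_filter.1 hj').2)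
      ⟨j, Finset.mem_filter.2 ⟨Finset.mem_univ j, hj⟩⟩
  have hhatpos : ∀ R : S × S → ℝ, (∀ e ∈ B, 0 ≤ R e) → ∀ e ∈ B, 0 ≤ hatQ Qt κ R e :=
    fun R hR e he => add_nonneg (mul_nonneg (by linarith) (hQtpos e he).le)
      (mul_nonneg hκ0.le (hR e he))
  have hμ0 : ∀ R : S × S → ℝ, (∀ e ∈ B, 0 ≤ R e) → ∀ i, 0 ≤ rowSum B (hatQ Qt κ R) i :=
    fun R hR i => Finset.sum_nonneg fun j hj =>
      hhatpos R hR _ (Finset.mem_filter.1 hj).2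
  constructor
  · intro Q hQ Q' hQ' a b ha hb hab
    refine ⟨fun e he => ?_, fun e he => ?_⟩
    · simpa using add_nonneg (mul_nonneg ha (hQ.1 e he)) (mul_nonneg hb (hQ'.1 e he))
    · simp [hQ.2 e he, hQ'.2 e he]
  · intro Q hQ Q' hQ' a b ha hb hab
    have hcomb : ∀ e ∈ B, 0 ≤ (a • Q + b • Q') e := fun e he => by
      simpa using add_nonneg (mul_nonneg ha (hQ.1 e he)) (mul_nonneg hb (hQ'.1 e he))
    have hlin : ∀ e, hatQ Qt κ (a • Q + b • Q') e =
        a * hatQ Qt κ Q e + b * hatQ Qt κ Q' e := by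
      intro e
      simp only [hatQ, Pi.add_apply, Pi.smul_apply, smul_eq_mul]
      linear_combination (1 - κ) * Qt e * hab.symm
    have hrowlin : ∀ i, rowSum B (hatQ Qt κ (a • Q + b • Q')) i =
        a * rowSum B (hatQ Qt κ Q) i + b * rowSum B (hatQ Qt κ Q') i := by
      intro i
      unfold rowSum
      simp_rw [hlin]
      rw [Finset.sum_add_distrib, Finset.mul_sum, Finset.mul_sum]
    rw [psibar_eq B hB Qt hQtpos κ κ' _ (hhatpos _ hcomb),
      psibar_eq B hB Qt hQtpos κ κ' Q (hhatpos _ hQ.1),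
      psibar_eq B hB Qt hQtpos κ κ' Q' (hhatpos _ hQ'.1), smul_eq_mul, smul_eq_mul]
    have hre : a * (κ' * ∑ e ∈ B, hatQ Qt κ Q e *
          Real.log (hatQ Qt κ Q e /
            (Qt e * (rowSum B (hatQ Qt κ Q) e.1 / rowSum B Qt e.1)))) +
        b * (κ' * ∑ e ∈ B, hatQ Qt κ Q' e *
          Real.log (hatQ Qt κ Q' e /
            (Qt e * (rowSum B (hatQ Qt κ Q') e.1 / rowSum B Qt e.1)))) =
        κ' * ∑ e ∈ B, (a * (hatQ Qt κ Q e *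
          Real.log (hatQ Qt κ Q e /
            (Qt e * (rowSum B (hatQ Qt κ Q) e.1 / rowSum B Qt e.1)))) +
          b * (hatQ Qt κ Q' e *
          Real.log (hatQ Qt κ Q' e /
            (Qt e * (rowSum B (hatQ Qt κ Q') e.1 / rowSum B Qt e.1))))) := by
      rw [Finset.sum_add_distrib, ← Finset.mul_sum, ← Finset.mul_sum]
      ring
    rw [hre]
    apply mul_le_mul_of_nonneg_left _ hκ'.le
    apply Finset.sum_le_sum
    intro e he
    rw [hlin e, hrowlin e.1]
    have hden : Qt e * ((a * rowSum B (hatQ Qt κ Q) e.1 + b * rowSum B (hatQ Qt κ Q') e.1) /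
          rowSum B Qt e.1) =
        a * (Qt e * (rowSum B (hatQ Qt κ Q) e.1 / rowSum B Qt e.1)) +
        b * (Qt e * (rowSum B (hatQ Qt κ Q') e.1 / rowSum B Qt e.1)) := by
      ring
    rw [hden]
    have hzero : ∀ R : S × S → ℝ, (∀ e ∈ B, 0 ≤ R e) →
        Qt e * (rowSum B (hatQ Qt κ R) e.1 / rowSum B Qt e.1) = 0 →
        hatQ Qt κ R e = 0 := by
      intro R hR h
      rcases mul_eq_zero.1 h with h' | h'
      · exact absurd h' (hQtpos e he).ne'
      rcases div_eq_zero_iff.1 h' with h'' | h''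
      · have hall := (Finset.sum_eq_zero_iff_of_nonneg
          (fun j hj => hhatpos R hR _ (Finset.mem_filter.1 hj).2)).1 h''
        have hmem : e.2 ∈ Finset.univ.filter (fun j => (e.1, j) ∈ B) :=
          Finset.mem_filter.2 ⟨Finset.mem_univ _, by rwa [Prod.mk.eta]⟩
        have := hall e.2 hmem
        rwa [Prod.mk.eta] at this
      · exact absurd h'' (hμt e.1).ne'
    exact kl_key _ _ _ _ a b (hhatpos Q hQ.1 e he)
      (mul_nonneg (hQtpos e he).le (div_nonneg (hμ0 Q hQ.1 e.1) (hμt e.1).le))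
      (hzero Q hQ.1)
      (hhatpos Q' hQ'.1 e he)
      (mul_nonneg (hQtpos e he).le (div_nonneg (hμ0 Q' hQ'.1 e.1) (hμt e.1).le))
      (hzero Q' hQ'.1) ha hb hab
end

section
/- For every c : S × S → ℝ, the surrogate function ψ_{Q̃}(Q) = Σ_{(i,j)∈B} Q_{ij}·c_{ij} − ψ̄_{Q̃}(Q) is concave on the set {Q : S × S → ℝ | Q_{ij} ≥ 0 for all (i,j) ∈ B and Q_{ij} = 0 for (i,j) ∉ B}. -/
open Finset

lemma rowSum_nonneg {S : Type} [Fintype S] [DecidableEq S] (B : Finset (S × S))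
    (W : S × S → ℝ) (hW : ∀ e ∈ B, 0 ≤ W e) (i : S) : 0 ≤ rowSum B W i :=
  Finset.sum_nonneg fun j hj => hW _ (Finset.mem_filter.1 hj).2

lemma rowSum_pos {S : Type} [Fintype S] [DecidableEq S] (B : Finset (S × S))
    (W : S × S → ℝ) (hW : ∀ e ∈ B, 0 < W e) (i : S) (hB : ∃ j, (i, j) ∈ B) :
    0 < rowSum B W i := by
  obtain ⟨j, hj⟩ := hB
  exact Finset.sum_pos (fun j hj => hW _ (Finset.mem_filter.1 hj).2)
    ⟨j, Finset.mem_filter.2 ⟨Finset.mem_univ _, hj⟩⟩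

lemma edge_le_rowSum {S : Type} [Fintype S] [DecidableEq S] (B : Finset (S × S))
    (W : S × S → ℝ) (hW : ∀ e ∈ B, 0 ≤ W e) (e : S × S) (he : e ∈ B) :
    W e ≤ rowSum B W e.1 := by
  have : W (e.1, e.2) ≤ ∑ j ∈ Finset.univ.filter (fun j => (e.1, j) ∈ B), W (e.1, j) :=
    Finset.single_le_sum (f := fun j => W (e.1, j))
      (fun j hj => hW _ (Finset.mem_filter.1 hj).2)
      (Finset.mem_filter.2 ⟨Finset.mem_univ _, by simpa using he⟩)
  simpa [rowSum] using this

lemma sum_B_eq {S : Type} [Fintype S] [DecidableEq S] (B : Finset (S × S)) (g : S × S → ℝ) :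
    ∑ e ∈ B, g e = ∑ i : S, ∑ j ∈ Finset.univ.filter (fun j => (i, j) ∈ B), g (i, j) := by
  have h : ∑ e ∈ B, g e = ∑ e : S × S, if e ∈ B then g e else 0 := by
    rw [Finset.sum_ite_mem, Finset.univ_inter]
  rw [h, Fintype.sum_prod_type]
  exact Finset.sum_congr rfl fun i _ => (Finset.sum_filter _ _).symm

lemma hatQ_nonneg {S : Type} [Fintype S] [DecidableEq S] {B : Finset (S × S)}
    {Qt : S × S → ℝ} (hQtpos : ∀ e ∈ B, 0 < Qt e) {κ : ℝ} (hκ0 : 0 < κ) (hκ1 : κ ≤ 1)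
    {Q : S × S → ℝ} (hQ : ∀ e ∈ B, 0 ≤ Q e) : ∀ e ∈ B, 0 ≤ hatQ Qt κ Q e := fun e he =>
  add_nonneg (mul_nonneg (by linarith) (hQtpos e he).le) (mul_nonneg hκ0.le (hQ e he))

lemma psibar_decomp {S : Type} [Fintype S] [DecidableEq S] (B : Finset (S × S))
    (hB : ∀ i : S, ∃ j : S, (i, j) ∈ B)
    (Qt : S × S → ℝ) (hQtpos : ∀ e ∈ B, 0 < Qt e)
    (κ κ' : ℝ) (hκ0 : 0 < κ) (hκ1 : κ ≤ 1)
    (Q : S × S → ℝ) (hQ : ∀ e ∈ B, 0 ≤ Q e) :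
    psibar B Qt κ κ' Q =
      κ' * (∑ e ∈ B, hatQ Qt κ Q e * Real.log (hatQ Qt κ Q e / rowSum B (hatQ Qt κ Q) e.1))
      - κ' * (∑ e ∈ B, hatQ Qt κ Q e * Real.log (Qt e))
      + κ' * (∑ i : S, rowSum B (hatQ Qt κ Q) i * Real.log (rowSum B Qt i)) := by
  have hhat0 : ∀ e ∈ B, 0 ≤ hatQ Qt κ Q e := hatQ_nonneg hQtpos hκ0 hκ1 hQ
  have key : (∑ e ∈ B, hatQ Qt κ Q e * Real.log (hatQ Qt κ Q e / Qt e)) -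
        (∑ i : S, rowSum B (hatQ Qt κ Q) i *
          Real.log (rowSum B (hatQ Qt κ Q) i / rowSum B Qt i))
      = (∑ e ∈ B, hatQ Qt κ Q e * Real.log (hatQ Qt κ Q e / rowSum B (hatQ Qt κ Q) e.1))
        - (∑ e ∈ B, hatQ Qt κ Q e * Real.log (Qt e))
        + (∑ i : S, rowSum B (hatQ Qt κ Q) i * Real.log (rowSum B Qt i)) := by
    have h1 : ∑ e ∈ B, hatQ Qt κ Q e * Real.log (hatQ Qt κ Q e / Qt e)
        = ∑ e ∈ B, (hatQ Qt κ Q e * Real.log (hatQ Qt κ Q e)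
            - hatQ Qt κ Q e * Real.log (Qt e)) := by
      refine Finset.sum_congr rfl fun e he => ?_
      rcases (hhat0 e he).eq_or_lt with h | h
      · simp [← h]
      · rw [Real.log_div h.ne' (hQtpos e he).ne']; ring
    have h2 : ∑ i : S, rowSum B (hatQ Qt κ Q) i *
          Real.log (rowSum B (hatQ Qt κ Q) i / rowSum B Qt i)
        = ∑ i : S, (rowSum B (hatQ Qt κ Q) i * Real.log (rowSum B (hatQ Qt κ Q) i)
            - rowSum B (hatQ Qt κ Q) i * Real.log (rowSum B Qt i)) := by
      refine Finset.sum_congr rfl fun i _ => ?_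
      rcases (rowSum_nonneg B _ hhat0 i).eq_or_lt with h | h
      · simp [← h]
      · rw [Real.log_div h.ne' (rowSum_pos B Qt hQtpos i (hB i)).ne']; ring
    have h3 : ∑ e ∈ B, hatQ Qt κ Q e * Real.log (hatQ Qt κ Q e / rowSum B (hatQ Qt κ Q) e.1)
        = ∑ e ∈ B, (hatQ Qt κ Q e * Real.log (hatQ Qt κ Q e)
            - hatQ Qt κ Q e * Real.log (rowSum B (hatQ Qt κ Q) e.1)) := by
      refine Finset.sum_congr rfl fun e he => ?_
      rcases (hhat0 e he).eq_or_lt with h | h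
      · simp [← h]
      · have hr : 0 < rowSum B (hatQ Qt κ Q) e.1 :=
          lt_of_lt_of_le h (edge_le_rowSum B _ hhat0 e he)
        rw [Real.log_div h.ne' hr.ne']; ring
    have h4 : ∑ i : S, rowSum B (hatQ Qt κ Q) i * Real.log (rowSum B (hatQ Qt κ Q) i)
        = ∑ e ∈ B, hatQ Qt κ Q e * Real.log (rowSum B (hatQ Qt κ Q) e.1) := by
      rw [sum_B_eq B (fun e => hatQ Qt κ Q e * Real.log (rowSum B (hatQ Qt κ Q) e.1))]
      refine Finset.sum_congr rfl fun i _ => ?_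
      simp only [rowSum, Finset.sum_mul]
    rw [h1, h2, h3, Finset.sum_sub_distrib, Finset.sum_sub_distrib, Finset.sum_sub_distrib, h4]
    ring
  rw [psibar, key]; ring


/-- Two-point log-sum (joint convexity of `x log(x/y)`) inequality. -/
lemma klIneq (x1 y1 x2 y2 a b : ℝ) (hx1 : 0 ≤ x1) (h1 : x1 ≤ y1)
    (hx2 : 0 ≤ x2) (h2 : x2 ≤ y2) (ha : 0 ≤ a) (hb : 0 ≤ b) (hab : a + b = 1) :
    (a * x1 + b * x2) * Real.log ((a * x1 + b * x2) / (a * y1 + b * y2)) ≤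
      a * (x1 * Real.log (x1 / y1)) + b * (x2 * Real.log (x2 / y2)) := by
  have hy1 : 0 ≤ y1 := hx1.trans h1
  have hy2 : 0 ≤ y2 := hx2.trans h2
  rcases eq_or_lt_of_le (add_nonneg (mul_nonneg ha hy1) (mul_nonneg hb hy2)) with hv | hv
  · -- degenerate: a*y1 + b*y2 = 0
    have h1' : a * y1 = 0 := by nlinarith [mul_nonneg ha hy1, mul_nonneg hb hy2]
    have h2' : b * y2 = 0 := by nlinarith [mul_nonneg ha hy1, mul_nonneg hb hy2]
    have hax : a * x1 = 0 := le_antisymm (by nlinarith [mul_le_mul_of_nonneg_left h1 ha]) (mul_nonneg ha hx1)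
    have hbx : b * x2 = 0 := le_antisymm (by nlinarith [mul_le_mul_of_nonneg_left h2 hb]) (mul_nonneg hb hx2)
    have t1 : a * (x1 * Real.log (x1 / y1)) = 0 := by
      rcases mul_eq_zero.1 hax with h | h <;> simp [h]
    have t2 : b * (x2 * Real.log (x2 / y2)) = 0 := by
      rcases mul_eq_zero.1 hbx with h | h <;> simp [h]
    rw [hax, hbx, t1, t2]; simp
  · by_cases hy10 : y1 = 0
    · subst hy10
      have hx10 : x1 = 0 := le_antisymm h1 hx1
      subst hx10
      have hb0 : 0 < b * y2 := by simpa using hv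
      have hbpos : 0 < b := by
        rcases mul_pos_iff.1 hb0 with ⟨h, _⟩ | ⟨h, h'⟩
        · exact h
        · linarith
      simp only [mul_zero, zero_add, zero_mul, Real.log_zero, mul_zero, zero_add]
      rw [mul_div_mul_left _ _ (ne_of_gt hbpos)]
      exact le_of_eq (by ring)
    · by_cases hy20 : y2 = 0
      · subst hy20
        have hx20 : x2 = 0 := le_antisymm h2 hx2
        subst hx20
        have ha0 : 0 < a * y1 := by simpa using hv
        have hapos : 0 < a := by
          rcases mul_pos_iff.1 ha0 with ⟨h, _⟩ | ⟨h, h'⟩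
          · exact h
          · linarith
        simp only [mul_zero, add_zero, zero_mul, Real.log_zero, mul_zero]
        rw [mul_div_mul_left _ _ (ne_of_gt hapos)]
        exact le_of_eq (by ring)
      · have hy1p : 0 < y1 := lt_of_le_of_ne hy1 (Ne.symm hy10)
        have hy2p : 0 < y2 := lt_of_le_of_ne hy2 (Ne.symm hy20)
        set v := a * y1 + b * y2 with hvdef
        have hvne : v ≠ 0 := ne_of_gt hv
        have hw1 : 0 ≤ a * y1 / v := div_nonneg (mul_nonneg ha hy1) hv.le
        have hw2 : 0 ≤ b * y2 / v := div_nonneg (mul_nonneg hb hy2) hv.le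
        have hw12 : a * y1 / v + b * y2 / v = 1 := by field_simp; exact hvdef.symm
        have hconv := Real.convexOn_mul_log.2 (Set.mem_Ici.2 (div_nonneg hx1 hy1))
          (Set.mem_Ici.2 (div_nonneg hx2 hy2)) hw1 hw2 hw12
        simp only [smul_eq_mul] at hconv
        have key : a * y1 / v * (x1 / y1) + b * y2 / v * (x2 / y2) = (a * x1 + b * x2) / v := by
          field_simp
        rw [key] at hconv
        have e1 : (a * x1 + b * x2) * Real.log ((a * x1 + b * x2) / v)
            = v * (((a * x1 + b * x2) / v) * Real.log ((a * x1 + b * x2) / v)) := by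
          field_simp
        have e2 : v * (a * y1 / v * (x1 / y1 * Real.log (x1 / y1))
              + b * y2 / v * (x2 / y2 * Real.log (x2 / y2)))
            = a * (x1 * Real.log (x1 / y1)) + b * (x2 * Real.log (x2 / y2)) := by
          field_simp
        calc (a * x1 + b * x2) * Real.log ((a * x1 + b * x2) / v)
            = v * (((a * x1 + b * x2) / v) * Real.log ((a * x1 + b * x2) / v)) := e1
          _ ≤ v * (a * y1 / v * (x1 / y1 * Real.log (x1 / y1))
              + b * y2 / v * (x2 / y2 * Real.log (x2 / y2))) :=
              mul_le_mul_of_nonneg_left hconv hv.le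
          _ = a * (x1 * Real.log (x1 / y1)) + b * (x2 * Real.log (x2 / y2)) := e2


/-- For every coefficient function `c : S × S → ℝ`, the surrogate
function `ψ_{Q̃}(Q) = Σ_{(i,j)∈B} Q_{ij}·c_{ij} − ψ̄_{Q̃}(Q)` is concave on the set of
edge measures `Q` that are nonnegative on `B` and vanish off `B`. -/
theorem surrogate_concaveOn {S : Type} [Fintype S] [DecidableEq S] (B : Finset (S × S))
    (hB : ∀ i : S, ∃ j : S, (i, j) ∈ B)
    (Qt : S × S → ℝ) (hQtoff : ∀ e ∉ B, Qt e = 0) (hQtpos : ∀ e ∈ B, 0 < Qt e)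
    (κ κ' : ℝ) (hκ0 : 0 < κ) (hκ1 : κ ≤ 1) (hκ' : 0 < κ')
    (c : S × S → ℝ) :
    ConcaveOn ℝ {Q : S × S → ℝ | (∀ e ∈ B, 0 ≤ Q e) ∧ ∀ e ∉ B, Q e = 0}
      (fun Q => (∑ e ∈ B, Q e * c e) - psibar B Qt κ κ' Q) := by
  have hconvD : Convex ℝ {Q : S × S → ℝ | (∀ e ∈ B, 0 ≤ Q e) ∧ ∀ e ∉ B, Q e = 0} := by
    intro x hx y hy a b ha hb hab
    refine ⟨fun e he => ?_, fun e he => ?_⟩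
    · simp only [Pi.add_apply, Pi.smul_apply, smul_eq_mul]
      exact add_nonneg (mul_nonneg ha (hx.1 e he)) (mul_nonneg hb (hy.1 e he))
    · simp [Pi.add_apply, Pi.smul_apply, smul_eq_mul, hx.2 e he, hy.2 e he]
  refine ⟨hconvD, fun x hx y hy a b ha hb hab => ?_⟩
  have hz : a • x + b • y ∈ {Q : S × S → ℝ | (∀ e ∈ B, 0 ≤ Q e) ∧ ∀ e ∉ B, Q e = 0} :=
    hconvD hx hy ha hb hab
  simp only [smul_eq_mul]
  rw [psibar_decomp B hB Qt hQtpos κ κ' hκ0 hκ1 x hx.1,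
      psibar_decomp B hB Qt hQtpos κ κ' hκ0 hκ1 y hy.1,
      psibar_decomp B hB Qt hQtpos κ κ' hκ0 hκ1 _ hz.1]
  have hhat : ∀ e : S × S, hatQ Qt κ (a • x + b • y) e
      = a * hatQ Qt κ x e + b * hatQ Qt κ y e := by
    intro e
    simp only [hatQ, Pi.add_apply, Pi.smul_apply, smul_eq_mul]
    linear_combination (κ - 1) * Qt e * hab
  have hrow : ∀ i : S, rowSum B (hatQ Qt κ (a • x + b • y)) i
      = a * rowSum B (hatQ Qt κ x) i + b * rowSum B (hatQ Qt κ y) i := by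
    intro i
    simp only [rowSum, hhat, Finset.mul_sum, Finset.sum_add_distrib]
  have hC : (∑ e ∈ B, (a • x + b • y) e * c e)
      = a * (∑ e ∈ B, x e * c e) + b * (∑ e ∈ B, y e * c e) := by
    rw [Finset.mul_sum, Finset.mul_sum, ← Finset.sum_add_distrib]
    refine Finset.sum_congr rfl fun e _ => ?_
    simp only [Pi.add_apply, Pi.smul_apply, smul_eq_mul]; ring
  have hL : (∑ e ∈ B, hatQ Qt κ (a • x + b • y) e * Real.log (Qt e))
      = a * (∑ e ∈ B, hatQ Qt κ x e * Real.log (Qt e))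
        + b * (∑ e ∈ B, hatQ Qt κ y e * Real.log (Qt e)) := by
    rw [Finset.mul_sum, Finset.mul_sum, ← Finset.sum_add_distrib]
    refine Finset.sum_congr rfl fun e _ => ?_
    rw [hhat]; ring
  have hM : (∑ i : S, rowSum B (hatQ Qt κ (a • x + b • y)) i * Real.log (rowSum B Qt i))
      = a * (∑ i : S, rowSum B (hatQ Qt κ x) i * Real.log (rowSum B Qt i))
        + b * (∑ i : S, rowSum B (hatQ Qt κ y) i * Real.log (rowSum B Qt i)) := by
    rw [Finset.mul_sum, Finset.mul_sum, ← Finset.sum_add_distrib]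
    refine Finset.sum_congr rfl fun i _ => ?_
    rw [hrow]; ring
  have hxhat : ∀ e ∈ B, 0 ≤ hatQ Qt κ x e := hatQ_nonneg hQtpos hκ0 hκ1 hx.1
  have hyhat : ∀ e ∈ B, 0 ≤ hatQ Qt κ y e := hatQ_nonneg hQtpos hκ0 hκ1 hy.1
  have hF : (∑ e ∈ B, hatQ Qt κ (a • x + b • y) e *
        Real.log (hatQ Qt κ (a • x + b • y) e / rowSum B (hatQ Qt κ (a • x + b • y)) e.1))
      ≤ a * (∑ e ∈ B, hatQ Qt κ x e *
            Real.log (hatQ Qt κ x e / rowSum B (hatQ Qt κ x) e.1))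
        + b * (∑ e ∈ B, hatQ Qt κ y e *
            Real.log (hatQ Qt κ y e / rowSum B (hatQ Qt κ y) e.1)) := by
    rw [Finset.mul_sum, Finset.mul_sum, ← Finset.sum_add_distrib]
    refine Finset.sum_le_sum fun e he => ?_
    rw [hhat, hrow]
    exact klIneq _ _ _ _ a b (hxhat e he) (edge_le_rowSum B _ hxhat e he)
      (hyhat e he) (edge_le_rowSum B _ hyhat e he) ha hb hab
  rw [hC, hL, hM]
  nlinarith [mul_le_mul_of_nonneg_left hF hκ'.le]
end

section
/- Let Q : S × S → ℝ vanish off B and satisfy Q̂_{ij} > 0 for every (i,j) ∈ B. Then for each (i,j) ∈ B, the function t ↦ ψ̄_{Q̃}(Q + t·e_{ij}) (where e_{ij} : S × S → ℝ is the indicator of the coordinate (i,j)) is differentiable at t = 0 with derivative κ·κ'·log( (Q̂_{ij}/μ̂_i) · (μ̃_i/Q̃_{ij}) ), i.e., the partial derivative of ψ̄_{Q̃} with respect to Q_{ij} equals κκ'·( log(p̂_{ij}) − log(p̃_{ij}) ) where p̂_{ij} = Q̂_{ij}/μ̂_i and p̃_{ij} = Q̃_{ij}/μ̃_i. -/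
open Finset

lemma aux_deriv (a b κ : ℝ) (ha : 0 < a) (hb : 0 < b) :
    HasDerivAt (fun t : ℝ => (a + κ * t) * Real.log ((a + κ * t) / b))
      (κ * (Real.log (a / b) + 1)) 0 := by
  have h1 : HasDerivAt (fun x : ℝ => x / b) (1 / b) a := by
    simpa using (hasDerivAt_id a).div_const b
  have h2 : HasDerivAt Real.log (a / b)⁻¹ (a / b) :=
    Real.hasDerivAt_log (by positivity)
  have h3 : HasDerivAt (fun x : ℝ => Real.log (x / b)) ((a / b)⁻¹ * (1 / b)) a :=
    by have := h2.comp a h1; exact this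
  have h4 : HasDerivAt (fun x : ℝ => x * Real.log (x / b))
      (1 * Real.log (a / b) + a * ((a / b)⁻¹ * (1 / b))) a := (hasDerivAt_id a).mul h3
  have hlin : HasDerivAt (fun t : ℝ => a + κ * t) κ 0 := by
    simpa using ((hasDerivAt_id (0:ℝ)).const_mul κ).const_add a
  have h4' : HasDerivAt (fun x : ℝ => x * Real.log (x / b))
      (1 * Real.log (a / b) + a * ((a / b)⁻¹ * (1 / b))) (a + κ * 0) := by
    rw [show a + κ * 0 = a by ring]; exact h4
  have h5 := h4'.comp 0 hlin
  refine h5.congr_deriv ?_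
  field_simp

/-- Partial derivative of the surrogate penalty: if `Q` vanishes off `B`
and `Q̂_{ij} > 0` on `B`, then for each `(i,j) ∈ B`, the function
`t ↦ ψ̄_{Q̃}(Q + t·e_{ij})` is differentiable at `t = 0` with derivative
`κκ'·log( (Q̂_{ij}/μ̂_i) · (μ̃_i/Q̃_{ij}) )`. -/
theorem psibar_partial_deriv {S : Type} [Fintype S] [DecidableEq S]
    (B : Finset (S × S)) (hB : ∀ i : S, ∃ j : S, (i, j) ∈ B)
    (Qt : S × S → ℝ) (hQtoff : ∀ e ∉ B, Qt e = 0) (hQtpos : ∀ e ∈ B, 0 < Qt e)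
    (κ κ' : ℝ) (hκ0 : 0 < κ) (hκ1 : κ ≤ 1) (hκ' : 0 < κ')
    (Q : S × S → ℝ) (hQoff : ∀ e ∉ B, Q e = 0)
    (hQhatpos : ∀ e ∈ B, 0 < hatQ Qt κ Q e)
    (i j : S) (hij : (i, j) ∈ B) :
    HasDerivAt
      (fun t : ℝ =>
        psibar B Qt κ κ' (fun e => Q e + t * (if e = (i, j) then (1 : ℝ) else 0)))
      (κ * κ' * Real.log ((hatQ Qt κ Q (i, j) / rowSum B (hatQ Qt κ Q) i) *
        (rowSum B Qt i / Qt (i, j))))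
      0 := by
  set a := hatQ Qt κ Q (i, j) with ha_def
  set b := Qt (i, j) with hb_def
  set μ := rowSum B (hatQ Qt κ Q) i with hμ_def
  set ν := rowSum B Qt i with hν_def
  have hb : 0 < b := hQtpos _ hij
  have ha : 0 < a := hQhatpos _ hij
  have hjmem : j ∈ Finset.univ.filter (fun j' => (i, j') ∈ B) := by
    simp [hij]
  have hμ : 0 < μ := by
    refine Finset.sum_pos (fun j' hj' => ?_) ⟨j, hjmem⟩
    exact hQhatpos _ (by simpa using hj')
  have hν : 0 < ν := by
    refine Finset.sum_pos (fun j' hj' => ?_) ⟨j, hjmem⟩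
    exact hQtpos _ (by simpa using hj')
  -- the perturbed hat measure
  have hhat : ∀ t : ℝ, ∀ e : S × S,
      hatQ Qt κ (fun e => Q e + t * (if e = (i, j) then (1 : ℝ) else 0)) e
        = hatQ Qt κ Q e + κ * t * (if e = (i, j) then (1 : ℝ) else 0) := by
    intro t e
    simp only [hatQ]
    ring
  -- the perturbed row sums
  have hrow : ∀ t : ℝ, ∀ i' : S,
      rowSum B (hatQ Qt κ (fun e => Q e + t * (if e = (i, j) then (1 : ℝ) else 0))) i'
        = rowSum B (hatQ Qt κ Q) i' + κ * t * (if i' = i then (1 : ℝ) else 0) := by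
    intro t i'
    simp only [rowSum, hhat t, Finset.sum_add_distrib]
    congr 1
    by_cases hii : i' = i
    · subst hii
      rw [if_pos rfl]
      simp only [Prod.mk.injEq, true_and]
      simp [mul_ite, mul_one, mul_zero, Finset.sum_ite_eq', hjmem]
    · rw [if_neg hii]
      have : ∀ j' ∈ Finset.univ.filter (fun j' => (i', j') ∈ B),
          κ * t * (if (i', j') = (i, j) then (1:ℝ) else 0) = 0 := by
        intro j' _
        have : (i', j') ≠ (i, j) := by simp [hii]
        simp [this]
      rw [Finset.sum_congr rfl this]
      simp
  -- rewrite the function in a split form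
  have hfun : (fun t : ℝ =>
      psibar B Qt κ κ' (fun e => Q e + t * (if e = (i, j) then (1 : ℝ) else 0)))
      = fun t : ℝ => κ' *
        (((∑ e ∈ B.erase (i, j), hatQ Qt κ Q e * Real.log (hatQ Qt κ Q e / Qt e))
            + (a + κ * t) * Real.log ((a + κ * t) / b))
          - ((∑ i' ∈ Finset.univ.erase i, rowSum B (hatQ Qt κ Q) i' *
              Real.log (rowSum B (hatQ Qt κ Q) i' / rowSum B Qt i'))
            + (μ + κ * t) * Real.log ((μ + κ * t) / ν))) := by
    funext t
    simp only [psibar]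
    congr 1
    congr 1
    · rw [← Finset.sum_erase_add B _ hij]
      congr 1
      · refine Finset.sum_congr rfl (fun e he => ?_)
        have hne : e ≠ (i, j) := Finset.ne_of_mem_erase he
        rw [hhat t e, if_neg hne]
        ring_nf
      · rw [hhat t (i, j), if_pos rfl]
        simp only [mul_one, ha_def, hb_def]
    · rw [← Finset.sum_erase_add Finset.univ _ (Finset.mem_univ i)]
      congr 1
      · refine Finset.sum_congr rfl (fun i' hi' => ?_)
        have hne : i' ≠ i := Finset.ne_of_mem_erase hi'
        rw [hrow t i', if_neg hne]
        ring_nf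
      · rw [hrow t i, if_pos rfl]
        simp only [mul_one, hμ_def, hν_def]
  rw [hfun]
  have hd : HasDerivAt (fun t : ℝ =>
      (((∑ e ∈ B.erase (i, j), hatQ Qt κ Q e * Real.log (hatQ Qt κ Q e / Qt e))
          + (a + κ * t) * Real.log ((a + κ * t) / b))
        - ((∑ i' ∈ Finset.univ.erase i, rowSum B (hatQ Qt κ Q) i' *
            Real.log (rowSum B (hatQ Qt κ Q) i' / rowSum B Qt i'))
          + (μ + κ * t) * Real.log ((μ + κ * t) / ν))))
      ((κ * (Real.log (a / b) + 1)) - (κ * (Real.log (μ / ν) + 1))) 0 :=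
    (((aux_deriv a b κ ha hb).const_add _).sub ((aux_deriv μ ν κ hμ hν).const_add _))
  have := hd.const_mul κ'
  refine this.congr_deriv ?_
  rw [Real.log_mul (by positivity) (by positivity), Real.log_div ha.ne' hμ.ne',
    Real.log_div hν.ne' hb.ne', Real.log_div ha.ne' hb.ne', Real.log_div hμ.ne' hν.ne']
  ring
end

section
/- Let T : S × S → ℝ (with T_{ij} arbitrary for (i,j) ∈ B), let p̃_{ij} = Q̃_{ij}/μ̃_i, and define A : S × S → ℝ by A_{ij} = p̃_{ij}·exp( T_{ij}/(κκ') ) for (i,j) ∈ B and A_{ij} = 0 otherwise. Let ρ > 0 and γ : S → ℝ with γ_i > 0 for all i. Suppose Q̃ ∈ Q(B) and Q ∈ Q(B) are such that Q̂ = (1−κ)·Q̃ + κ·Q satisfies μ̂_i > 0 for all i ∈ S and Q̂_{ij}/μ̂_i = A_{ij}·γ_j/(ρ·γ_i) for all (i,j) ∈ B. Then the surrogate function with linear coefficients T evaluates at Q to ψ_{Q̃}(Q) = Σ_{(i,j)∈B} Q_{ij}·T_{ij} − ψ̄_{Q̃}(Q) = κ'·log ρ − ((1−κ)/κ)·Σ_{(i,j)∈B}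 Q̃_{ij}·T_{ij}. In particular, if κ = 1 then ψ_{Q̃}(Q) = κ'·log ρ. -/
open Finset

/-- Membership in the polytope `Q(B)`: nonnegative on `B`, vanishing off `B`,
total mass one, and flow-balanced. -/
def memEdgePolytope {S : Type} [Fintype S] [DecidableEq S]
    (B : Finset (S × S)) (Q : S × S → ℝ) : Prop :=
  (∀ e ∈ B, 0 ≤ Q e) ∧ (∀ e ∉ B, Q e = 0) ∧
  (∑ e ∈ B, Q e = 1) ∧
  ∀ i : S,
    (∑ j ∈ Finset.univ.filter (fun j => (i, j) ∈ B), Q (i, j)) =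
    (∑ k ∈ Finset.univ.filter (fun k => (k, i) ∈ B), Q (k, i))

/-- Fiberwise decomposition of a sum over `B` by first coordinate. -/
lemma edge_sum_fst {S : Type} [Fintype S] [DecidableEq S] (B : Finset (S × S)) (F : S × S → ℝ) :
    ∑ e ∈ B, F e = ∑ i : S, ∑ j ∈ Finset.univ.filter (fun j => (i, j) ∈ B), F (i, j) := by
  rw [← Finset.sum_fiberwise_of_maps_to (g := Prod.fst) (fun e _ => Finset.mem_univ e.1) F]
  refine Finset.sum_congr rfl fun i _ => ?_
  refine Finset.sum_nbij' (fun e => e.2) (fun j => (i, j)) ?_ ?_ ?_ ?_ ?_ <;>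
    simp (config := {contextual := true}) [Prod.ext_iff, eq_comm]

/-- Fiberwise decomposition of a sum over `B` by second coordinate. -/
lemma edge_sum_snd {S : Type} [Fintype S] [DecidableEq S] (B : Finset (S × S)) (F : S × S → ℝ) :
    ∑ e ∈ B, F e = ∑ j : S, ∑ i ∈ Finset.univ.filter (fun i => (i, j) ∈ B), F (i, j) := by
  rw [← Finset.sum_fiberwise_of_maps_to (g := Prod.snd) (fun e _ => Finset.mem_univ e.2) F]
  refine Finset.sum_congr rfl fun j _ => ?_
  refine Finset.sum_nbij' (fun e => e.1) (fun i => (i, j)) ?_ ?_ ?_ ?_ ?_ <;>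
    simp (config := {contextual := true}) [Prod.ext_iff, eq_comm]

/-- With `A_{ij} = p̃_{ij}·exp(T_{ij}/(κκ'))` on `B` (and `0` off `B`),
`ρ > 0`, `γ > 0`, and `Q̃, Q ∈ Q(B)` such that the shifted edge measure
`Q̂ = (1−κ)Q̃ + κQ` has positive row sums and transition probabilities
`Q̂_{ij}/μ̂_i = A_{ij}·γ_j/(ρ·γ_i)` on `B`, the surrogate function with linear
coefficients `T` evaluates at `Q` to
`Σ_{(i,j)∈B} Q_{ij}·T_{ij} − ψ̄_{Q̃}(Q) = κ'·log ρ − ((1−κ)/κ)·Σ_{(i,j)∈B} Q̃_{ij}·T_{ij}`;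
in particular, if `κ = 1` the value is `κ'·log ρ`. -/
theorem surrogate_value_at_PF_stationary_point {S : Type} [Fintype S] [DecidableEq S]
    (B : Finset (S × S)) (hB : ∀ i : S, ∃ j : S, (i, j) ∈ B)
    (Qt : S × S → ℝ) (hQt : memEdgePolytope B Qt) (hQtpos : ∀ e ∈ B, 0 < Qt e)
    (κ κ' : ℝ) (hκ0 : 0 < κ) (hκ1 : κ ≤ 1) (hκ' : 0 < κ')
    (T : S × S → ℝ)
    (A : S × S → ℝ)
    (hA : ∀ e ∈ B, A e = (Qt e / rowSum B Qt e.1) * Real.exp (T e / (κ * κ')))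
    (hAoff : ∀ e ∉ B, A e = 0)
    (ρ : ℝ) (hρ : 0 < ρ) (γ : S → ℝ) (hγ : ∀ i, 0 < γ i)
    (Q : S × S → ℝ) (hQ : memEdgePolytope B Q)
    (hμpos : ∀ i : S, 0 < rowSum B (hatQ Qt κ Q) i)
    (hstat : ∀ e ∈ B,
      hatQ Qt κ Q e / rowSum B (hatQ Qt κ Q) e.1 = A e * γ e.2 / (ρ * γ e.1)) :
    (∑ e ∈ B, Q e * T e) - psibar B Qt κ κ' Q =
      κ' * Real.log ρ - ((1 - κ) / κ) * ∑ e ∈ B, Qt e * T e ∧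
    (κ = 1 →
      (∑ e ∈ B, Q e * T e) - psibar B Qt κ κ' Q = κ' * Real.log ρ) := by
  obtain ⟨hQt0, hQtoff, hQtsum, hQtbal⟩ := hQt
  obtain ⟨hQ0, hQoff, hQsum, hQbal⟩ := hQ
  have hκne : κ ≠ 0 := hκ0.ne'
  have hκ'ne : κ' ≠ 0 := hκ'.ne'
  -- positivity of the tilde row sums
  have hμt : ∀ i, 0 < rowSum B Qt i := by
    intro i
    obtain ⟨j, hj⟩ := hB i
    exact Finset.sum_pos (fun j' hj' => hQtpos (i, j') (by simpa using hj'))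
      ⟨j, by simp [hj]⟩
  -- positivity of Q̂ on B
  have hQhpos : ∀ e ∈ B, 0 < hatQ Qt κ Q e := by
    intro e he
    have h1 := hstat e he
    have hApos : 0 < A e := by
      rw [hA e he]
      exact mul_pos (div_pos (hQtpos e he) (hμt e.1)) (Real.exp_pos _)
    have h2 : 0 < A e * γ e.2 / (ρ * γ e.1) :=
      div_pos (mul_pos hApos (hγ e.2)) (mul_pos hρ (hγ e.1))
    have h3 : hatQ Qt κ Q e =
        (A e * γ e.2 / (ρ * γ e.1)) * rowSum B (hatQ Qt κ Q) e.1 := by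
      rw [← h1, div_mul_cancel₀ _ (hμpos e.1).ne']
    rw [h3]
    exact mul_pos h2 (hμpos e.1)
  -- key pointwise identity for the logarithm
  have key : ∀ e ∈ B, Real.log (hatQ Qt κ Q e / Qt e) =
      T e / (κ * κ') + Real.log (γ e.2) - Real.log (γ e.1) - Real.log ρ +
      Real.log (rowSum B (hatQ Qt κ Q) e.1 / rowSum B Qt e.1) := by
    intro e he
    have h1 := hstat e he
    have hne : rowSum B (hatQ Qt κ Q) e.1 ≠ 0 := (hμpos e.1).ne'
    have hnet : rowSum B Qt e.1 ≠ 0 := (hμt e.1).ne'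
    have hγ1 : γ e.1 ≠ 0 := (hγ e.1).ne'
    have hγ2 : γ e.2 ≠ 0 := (hγ e.2).ne'
    have hρne : ρ ≠ 0 := hρ.ne'
    have hQte : Qt e ≠ 0 := (hQtpos e he).ne'
    have heq : hatQ Qt κ Q e / Qt e =
        Real.exp (T e / (κ * κ')) * (γ e.2 / (ρ * γ e.1)) *
          (rowSum B (hatQ Qt κ Q) e.1 / rowSum B Qt e.1) := by
      rw [hA e he] at h1
      field_simp at h1 ⊢
      linarith [h1]
    rw [heq, Real.log_mul (by positivity) (by positivity),
      Real.log_mul (Real.exp_pos _).ne' (by positivity),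
      Real.log_exp, Real.log_div hγ2 (by positivity),
      Real.log_mul hρne hγ1]
    ring
  -- total mass of Q̂ is one
  have hS4 : ∑ e ∈ B, hatQ Qt κ Q e = 1 := by
    simp only [hatQ]
    rw [Finset.sum_add_distrib, ← Finset.mul_sum, ← Finset.mul_sum, hQtsum, hQsum]
    ring
  -- flow balance of Q̂
  have hbal : ∀ i : S, rowSum B (hatQ Qt κ Q) i =
      ∑ k ∈ Finset.univ.filter (fun k => (k, i) ∈ B), hatQ Qt κ Q (k, i) := by
    intro i
    simp only [rowSum, hatQ]
    rw [Finset.sum_add_distrib, ← Finset.mul_sum, ← Finset.mul_sum,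
      Finset.sum_add_distrib, ← Finset.mul_sum, ← Finset.mul_sum,
      hQtbal i, hQbal i]
  -- the γ-telescoping sums agree
  have hS23 : ∑ e ∈ B, hatQ Qt κ Q e * Real.log (γ e.2) =
      ∑ e ∈ B, hatQ Qt κ Q e * Real.log (γ e.1) := by
    rw [edge_sum_snd B (fun e => hatQ Qt κ Q e * Real.log (γ e.2)),
      edge_sum_fst B (fun e => hatQ Qt κ Q e * Real.log (γ e.1))]
    refine Finset.sum_congr rfl fun i _ => ?_
    dsimp only
    rw [← Finset.sum_mul, ← Finset.sum_mul, ← hbal i]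
    rfl
  -- the row-sum log term regroups into the μ̂-sum
  have hS5 : ∑ e ∈ B, hatQ Qt κ Q e *
        Real.log (rowSum B (hatQ Qt κ Q) e.1 / rowSum B Qt e.1) =
      ∑ i : S, rowSum B (hatQ Qt κ Q) i *
        Real.log (rowSum B (hatQ Qt κ Q) i / rowSum B Qt i) := by
    rw [edge_sum_fst B]
    refine Finset.sum_congr rfl fun i _ => ?_
    dsimp only
    rw [← Finset.sum_mul]
    rfl
  -- expand the entropy sum
  have hmain : ∑ e ∈ B, hatQ Qt κ Q e * Real.log (hatQ Qt κ Q e / Qt e) =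
      (∑ e ∈ B, hatQ Qt κ Q e * T e) / (κ * κ') - Real.log ρ +
      ∑ i : S, rowSum B (hatQ Qt κ Q) i *
        Real.log (rowSum B (hatQ Qt κ Q) i / rowSum B Qt i) := by
    have step : ∀ e ∈ B, hatQ Qt κ Q e * Real.log (hatQ Qt κ Q e / Qt e) =
        hatQ Qt κ Q e * T e / (κ * κ') +
        hatQ Qt κ Q e * Real.log (γ e.2) -
        hatQ Qt κ Q e * Real.log (γ e.1) -
        Real.log ρ * hatQ Qt κ Q e +
        hatQ Qt κ Q e *
          Real.log (rowSum B (hatQ Qt κ Q) e.1 / rowSum B Qt e.1) := by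
      intro e he
      rw [key e he]; ring
    rw [Finset.sum_congr rfl step]
    rw [Finset.sum_add_distrib, Finset.sum_sub_distrib, Finset.sum_sub_distrib,
      Finset.sum_add_distrib, ← Finset.sum_div, ← Finset.mul_sum, hS4, hS23, hS5]
    ring
  -- the value of the linear part over Q̂
  have hS1 : ∑ e ∈ B, hatQ Qt κ Q e * T e =
      (1 - κ) * ∑ e ∈ B, Qt e * T e + κ * ∑ e ∈ B, Q e * T e := by
    simp only [hatQ, add_mul, mul_assoc]
    rw [Finset.sum_add_distrib, ← Finset.mul_sum, ← Finset.mul_sum]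
  -- compute ψ̄
  have hpsi : psibar B Qt κ κ' Q =
      ((1 - κ) * ∑ e ∈ B, Qt e * T e + κ * ∑ e ∈ B, Q e * T e) / κ -
        κ' * Real.log ρ := by
    rw [psibar, hmain, hS1]
    field_simp
    ring
  constructor
  · rw [hpsi]
    field_simp
    ring
  · intro h1
    rw [hpsi, h1]
    norm_num
end
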